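/- Let N_{r,s}(U) and N_{r̃,s̃}(Ũ) be pseudo H-type Lie algebras with dim U = dim Ũ and r + s = r̃ + s̃, r ≠ s. If Φ : N_{r,s}(U) → N_{r̃,s̃}(Ũ) is a Lie algebra isomorphism, then (r̃, s̃) = (r, s) or (r̃, s̃) = (s, r). -/

import Mathlib

/-- The standard pseudo-Euclidean bilinear form of signature `(r, n - r)` on `ℝⁿ`:
`⟨x, y⟩ = ∑_{i<r} x_i y_i − ∑_{i≥r} x_i y_i`. -/
noncomputable def stdForm (n r : ℕ) : LinearMap.BilinForm ℝ (Fin n → ℝ) :=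
  Matrix.toBilin' (Matrix.diagonal fun i : Fin n => if (i : ℕ) < r then (1 : ℝ) else -1)

lemma stdForm_apply (n r : ℕ) (z v : Fin n → ℝ) :
    stdForm n r z v = ∑ i : Fin n, (if (i:ℕ) < r then (1:ℝ) else -1) * z i * v i := by
  simp [stdForm, Matrix.toBilin'_apply', dotProduct, Matrix.mulVec_diagonal,
    mul_comm, ite_mul, mul_ite]

lemma stdForm_comm (n r : ℕ) (z v : Fin n → ℝ) : stdForm n r z v = stdForm n r v z := by
  rw [stdForm_apply, stdForm_apply]
  exact Finset.sum_congr rfl fun i _ => by ring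

lemma stdForm_single (n r : ℕ) (z : Fin n → ℝ) (j : Fin n) :
    stdForm n r z (Pi.single j 1) = (if (j:ℕ) < r then (1:ℝ) else -1) * z j := by
  rw [stdForm_apply]
  rw [Finset.sum_eq_single j]
  · simp
  · intro i _ hij; simp [Pi.single_apply, hij]
  · simp

lemma stdForm_nondeg (n r : ℕ) : (stdForm n r).Nondegenerate := by
  suffices hL : (stdForm n r).SeparatingLeft from
    ⟨hL, fun z hz => hL z fun v => by rw [stdForm_comm]; exact hz v⟩
  intro z hz
  funext j
  have := hz (Pi.single j 1)
  rw [stdForm_single] at this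
  simp only [Pi.zero_apply]
  rcases lt_or_ge (j:ℕ) r with h | h
  · rw [if_pos h] at this; linarith
  · rw [if_neg (not_lt.mpr h)] at this; linarith

lemma stdForm_single_single (n r : ℕ) (a b : Fin n) :
    stdForm n r (Pi.single a 1) (Pi.single b 1) =
      if a = b then (if (b:ℕ) < r then (1:ℝ) else -1) else 0 := by
  rw [stdForm_single, Pi.single_apply]
  split <;> simp [eq_comm]

-- each diagonal term of a null vector's norm
lemma null_eq_zero_of_high_zero (n r : ℕ) (v : Fin n → ℝ)
    (h0 : ∀ i : Fin n, ¬ ((i:ℕ) < r) → v i = 0) (hnull : stdForm n r v v = 0) : v = 0 := by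
  rw [stdForm_apply] at hnull
  have hterm : ∀ i : Fin n, i ∈ Finset.univ → (0:ℝ) ≤ (if (i:ℕ) < r then (1:ℝ) else -1) * v i * v i := by
    intro i _
    by_cases h : (i:ℕ) < r
    · rw [if_pos h]; nlinarith [sq_nonneg (v i)]
    · rw [h0 i h]; simp
  have := (Finset.sum_eq_zero_iff_of_nonneg hterm).mp hnull
  funext i
  by_cases h : (i:ℕ) < r
  · have := this i (Finset.mem_univ i)
    rw [if_pos h, one_mul] at this
    simpa using mul_self_eq_zero.mp this
  · simpa using h0 i h

lemma null_eq_zero_of_low_zero (n r : ℕ) (v : Fin n → ℝ)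
    (h0 : ∀ i : Fin n, (i:ℕ) < r → v i = 0) (hnull : stdForm n r v v = 0) : v = 0 := by
  rw [stdForm_apply] at hnull
  have hterm : ∀ i : Fin n, i ∈ Finset.univ → (if (i:ℕ) < r then (1:ℝ) else -1) * v i * v i ≤ 0 := by
    intro i _
    by_cases h : (i:ℕ) < r
    · rw [h0 i h]; simp
    · rw [if_neg h]; nlinarith [sq_nonneg (v i)]
  have hnull' : ∑ i : Fin n, -((if (i:ℕ) < r then (1:ℝ) else -1) * v i * v i) = 0 := by
    rw [Finset.sum_neg_distrib, hnull, neg_zero]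
  have := (Finset.sum_eq_zero_iff_of_nonneg (fun i hi => neg_nonneg.mpr (hterm i hi))).mp hnull'
  funext i
  by_cases h : (i:ℕ) < r
  · simpa using h0 i h
  · have := this i (Finset.mem_univ i)
    rw [if_neg h] at this
    simp only [Pi.zero_apply]
    nlinarith [this]

lemma null_finrank_le (n r s : ℕ) (hrs : r + s = n) (V : Submodule ℝ (Fin n → ℝ))
    (hV : ∀ v ∈ V, stdForm n r v v = 0) : Module.finrank ℝ V ≤ min r s := by
  have hle1 : Module.finrank ℝ V ≤ s := by
    have hL : Function.Injective
        ((LinearMap.funLeft ℝ ℝ (fun j : Fin s => (⟨r + (j:ℕ), by omega⟩ : Fin n))).comp V.subtype) := by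
      intro ⟨v, hv⟩ ⟨w, hw⟩ h
      have h' : ∀ j : Fin s, v ⟨r + (j:ℕ), by omega⟩ = w ⟨r + (j:ℕ), by omega⟩ :=
        fun j => congrFun h j
      have hz : (v - w) = 0 := by
        apply null_eq_zero_of_high_zero n r
        · intro i hi
          have hri : r ≤ (i:ℕ) := not_lt.mp hi
          have hj : (i:ℕ) - r < s := by omega
          have := h' ⟨(i:ℕ) - r, hj⟩
          simp only [Pi.sub_apply]
          have hieq : (⟨r + ((i:ℕ) - r), by omega⟩ : Fin n) = i := by
            ext; simp; omega
          rw [hieq] at this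
          linarith
        · have hvw : v - w ∈ V := V.sub_mem hv hw
          exact hV _ hvw
      ext1
      exact sub_eq_zero.mp hz
    calc Module.finrank ℝ V ≤ Module.finrank ℝ (Fin s → ℝ) :=
          LinearMap.finrank_le_finrank_of_injective hL
      _ = s := by simp
  have hle2 : Module.finrank ℝ V ≤ r := by
    have hL : Function.Injective
        ((LinearMap.funLeft ℝ ℝ (fun j : Fin r => (⟨(j:ℕ), by omega⟩ : Fin n))).comp V.subtype) := by
      intro ⟨v, hv⟩ ⟨w, hw⟩ h
      have h' : ∀ j : Fin r, v ⟨(j:ℕ), by omega⟩ = w ⟨(j:ℕ), by omega⟩ :=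
        fun j => congrFun h j
      have hz : (v - w) = 0 := by
        apply null_eq_zero_of_low_zero n r
        · intro i hi
          have := h' ⟨(i:ℕ), hi⟩
          simp only [Pi.sub_apply]
          have hieq : (⟨(i:ℕ), by omega⟩ : Fin n) = i := by ext; simp
          rw [hieq] at this
          linarith
        · exact hV _ (V.sub_mem hv hw)
      ext1
      exact sub_eq_zero.mp hz
    calc Module.finrank ℝ V ≤ Module.finrank ℝ (Fin r → ℝ) :=
          LinearMap.finrank_le_finrank_of_injective hL
      _ = r := by simp
  exact le_min hle2 hle1

lemma exists_null_subspace (n r s : ℕ) (hrs : r + s = n) :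
    ∃ V : Submodule ℝ (Fin n → ℝ), (∀ v ∈ V, stdForm n r v v = 0) ∧
      Module.finrank ℝ V = min r s := by
  set m := min r s with hm
  have hmr : m ≤ r := min_le_left r s
  have hms : m ≤ s := min_le_right r s
  have hlt1 : ∀ k : Fin m, (k:ℕ) < n := fun k => by omega
  have hlt2 : ∀ k : Fin m, r + (k:ℕ) < n := fun k => by have := k.2; omega
  set g : Fin m → (Fin n → ℝ) := fun k =>
    Pi.single (⟨(k:ℕ), hlt1 k⟩ : Fin n) 1 + Pi.single (⟨r + (k:ℕ), hlt2 k⟩ : Fin n) 1 with hg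
  have hgval : ∀ k l : Fin m, g l ⟨r + (k:ℕ), hlt2 k⟩ = if l = k then 1 else 0 := by
    intro k l
    simp only [hg, Pi.add_apply, Pi.single_apply]
    have h1 : ¬ ((⟨r + (k:ℕ), hlt2 k⟩ : Fin n) = ⟨(l:ℕ), hlt1 l⟩) := by
      intro h; have := Fin.val_eq_of_eq h; simp at this; omega
    have h2 : ((⟨r + (k:ℕ), hlt2 k⟩ : Fin n) = ⟨r + (l:ℕ), hlt2 l⟩) ↔ l = k := by
      constructor
      · intro h; have := Fin.val_eq_of_eq h; simp at this; exact Fin.ext this.symm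
      · intro h; subst h; rfl
    rw [if_neg h1, zero_add]
    by_cases h : l = k
    · rw [if_pos (h2.mpr h), if_pos h]
    · rw [if_neg (fun hh => h (h2.mp hh)), if_neg h]
  have hQg : ∀ k l : Fin m, stdForm n r (g k) (g l) = 0 := by
    intro k l
    have e1 : ((⟨(k:ℕ), hlt1 k⟩ : Fin n) = ⟨(l:ℕ), hlt1 l⟩) ↔ k = l := by
      constructor
      · intro h; exact Fin.ext (by simpa using Fin.val_eq_of_eq h)
      · intro h; subst h; rfl
    have e2 : ((⟨r + (k:ℕ), hlt2 k⟩ : Fin n) = ⟨r + (l:ℕ), hlt2 l⟩) ↔ k = l := by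
      constructor
      · intro h; have := Fin.val_eq_of_eq h; simp at this; exact Fin.ext this
      · intro h; subst h; rfl
    have ne1 : (⟨(k:ℕ), hlt1 k⟩ : Fin n) ≠ ⟨r + (l:ℕ), hlt2 l⟩ := by
      intro h; have := Fin.val_eq_of_eq h; simp at this; omega
    have ne2 : (⟨r + (k:ℕ), hlt2 k⟩ : Fin n) ≠ ⟨(l:ℕ), hlt1 l⟩ := by
      intro h; have := Fin.val_eq_of_eq h; simp at this; omega
    simp only [hg, map_add, LinearMap.add_apply, stdForm_single_single]
    rw [if_neg ne1, if_neg ne2]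
    by_cases h : k = l
    · subst h
      rw [if_pos (e1.mpr rfl), if_pos (e2.mpr rfl)]
      have hkr : ((⟨(k:ℕ), hlt1 k⟩ : Fin n) : ℕ) < r := by simp; omega
      have hkr2 : ¬ (((⟨r + (k:ℕ), hlt2 k⟩ : Fin n) : ℕ) < r) := by simp
      rw [if_pos hkr, if_neg hkr2]
      ring
    · rw [if_neg (fun hh => h (e1.mp hh)), if_neg (fun hh => h (e2.mp hh))]
      ring
  have hgli : LinearIndependent ℝ g := by
    rw [Fintype.linearIndependent_iff]
    intro c hc k
    have := congrFun hc ⟨r + (k:ℕ), hlt2 k⟩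
    simp only [Finset.sum_apply, Pi.smul_apply, smul_eq_mul, Pi.zero_apply] at this
    rw [Finset.sum_congr rfl (fun l _ => by rw [hgval k l])] at this
    simpa using this
  refine ⟨Submodule.span ℝ (Set.range g), ?_, ?_⟩
  · intro v hv
    rw [Submodule.mem_span_range_iff_exists_fun] at hv
    obtain ⟨c, rfl⟩ := hv
    simp only [map_sum, map_smul, LinearMap.sum_apply, LinearMap.smul_apply, smul_eq_mul]
    simp [hQg]
  · rw [finrank_span_eq_card hgli]
    simp

lemma end_one_ne_zero {U : Type*} [AddCommGroup U] [Module ℝ U] [Nontrivial U] :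
    (1 : Module.End ℝ U) ≠ 0 := by
  obtain ⟨x, hx⟩ := exists_ne (0 : U)
  intro h
  exact hx (by simpa using LinearMap.congr_fun h x)

/-- If `J z = 0` then `z = 0`, via Clifford polarization. -/
lemma z_eq_zero_of_J_eq_zero {U : Type*} [AddCommGroup U] [Module ℝ U] [Nontrivial U]
    (n q : ℕ) (J : (Fin n → ℝ) →ₗ[ℝ] Module.End ℝ U)
    (hJ : ∀ z, J z * J z = -(stdForm n q z z) • (1 : Module.End ℝ U))
    (z : Fin n → ℝ) (hz : J z = 0) : z = 0 := by
  apply (stdForm_nondeg n q).1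
  intro w
  have h1 := hJ (z + w)
  rw [map_add] at h1
  have expand : (J z + J w) * (J z + J w)
      = J z * J z + (J z * J w + J w * J z) + J w * J w := by
    rw [add_mul, mul_add, mul_add]; abel
  rw [expand, hJ z, hJ w, hz] at h1
  simp only [zero_mul, mul_zero, add_zero, zero_add] at h1
  have hQexp : stdForm n q (z+w) (z+w)
      = stdForm n q z z + 2 * stdForm n q z w + stdForm n q w w := by
    simp only [map_add, LinearMap.add_apply]
    rw [stdForm_comm n q w z]; ring
  rw [hQexp] at h1
  -- h1 : -(Qzz)•1 + -(Qww)•1 = -(Qzz + 2Qzw + Qww)•1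
  have h2 : (2 * stdForm n q z w) • (1 : Module.End ℝ U) = 0 := by
    have key : (2 * stdForm n q z w) • (1 : Module.End ℝ U)
        = (-(stdForm n q z z) • (1 : Module.End ℝ U) + -(stdForm n q w w) • 1)
          - (-(stdForm n q z z + 2 * stdForm n q z w + stdForm n q w w)) • (1 : Module.End ℝ U) := by
      module
    rw [key, h1, sub_self]
  rcases smul_eq_zero.mp h2 with h | h
  · linarith
  · exact absurd h end_one_ne_zero

/-- `⟨z,z⟩ = 0` iff `J z` has nontrivial kernel. -/
lemma null_iff_ker {U : Type*} [AddCommGroup U] [Module ℝ U] [Nontrivial U]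
    (n q : ℕ) (J : (Fin n → ℝ) →ₗ[ℝ] Module.End ℝ U)
    (hJ : ∀ z, J z * J z = -(stdForm n q z z) • (1 : Module.End ℝ U))
    (z : Fin n → ℝ) :
    stdForm n q z z = 0 ↔ ∃ x : U, x ≠ 0 ∧ J z x = 0 := by
  constructor
  · intro h
    by_contra hc
    push_neg at hc
    have hinj : Function.Injective ⇑(J z) := by
      intro a b hab
      by_contra hne2
      exact hc (a - b) (sub_ne_zero.mpr hne2) (by rw [map_sub, hab, sub_self])
    have h2 : J z * J z = 0 := by rw [hJ z, h]; simp
    obtain ⟨x, hx⟩ := exists_ne (0 : U)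
    have h3 : (J z) ((J z) x) = 0 := by
      rw [← Module.End.mul_apply, h2]; rfl
    have h4 : (J z) x = 0 := hinj (by rw [h3, map_zero])
    exact hx (hinj (by rw [h4, map_zero]))
  · rintro ⟨x, hx, hJx⟩
    have h1 := LinearMap.congr_fun (hJ z) x
    rw [Module.End.mul_apply, hJx, map_zero] at h1
    have h2 : stdForm n q z z • x = 0 := by
      have h2' : (0:U) = -(stdForm n q z z • x) := by simpa using h1
      exact neg_eq_zero.mp h2'.symm
    rcases smul_eq_zero.mp h2 with h | h
    · exact h
    · exact absurd h hx

/-- If `Φ` is a Lie algebra isomorphism between pseudo `H`-type algebras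
`N_{r,s}(U)` and `N_{r',s'}(W)` with `dim U = dim W`, `r + s = r' + s' = n` and `r ≠ s`,
then `(r', s') = (r, s)` or `(r', s') = (s, r)`. -/
theorem pseudo_H_type_isomorphism_signature
    {U W : Type*} [AddCommGroup U] [Module ℝ U] [FiniteDimensional ℝ U] [Nontrivial U]
    [AddCommGroup W] [Module ℝ W] [FiniteDimensional ℝ W] [Nontrivial W]
    (n r s r' s' : ℕ) (hrs : r + s = n) (hr's' : r' + s' = n) (hne : r ≠ s)
    (hdim : Module.finrank ℝ U = Module.finrank ℝ W)
    (BU : LinearMap.BilinForm ℝ U) (hBUnd : BU.Nondegenerate)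
    (hBUsymm : ∀ x y : U, BU x y = BU y x)
    (BW : LinearMap.BilinForm ℝ W) (hBWnd : BW.Nondegenerate)
    (hBWsymm : ∀ x y : W, BW x y = BW y x)
    (J : (Fin n → ℝ) →ₗ[ℝ] Module.End ℝ U)
    (hJ : ∀ z, J z * J z = -(stdForm n r z z) • (1 : Module.End ℝ U))
    (hJskew : ∀ (z : Fin n → ℝ) (x y : U), BU (J z x) y + BU x (J z y) = 0)
    (J' : (Fin n → ℝ) →ₗ[ℝ] Module.End ℝ W)
    (hJ' : ∀ z, J' z * J' z = -(stdForm n r' z z) • (1 : Module.End ℝ W))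
    (hJ'skew : ∀ (z : Fin n → ℝ) (x y : W), BW (J' z x) y + BW x (J' z y) = 0)
    (br : U →ₗ[ℝ] U →ₗ[ℝ] (Fin n → ℝ))
    (hbr : ∀ (z : Fin n → ℝ) (x y : U), BU (J z x) y = stdForm n r z (br x y))
    (br' : W →ₗ[ℝ] W →ₗ[ℝ] (Fin n → ℝ))
    (hbr' : ∀ (z : Fin n → ℝ) (x y : W), BW (J' z x) y = stdForm n r' z (br' x y))
    (Φ : (U × (Fin n → ℝ)) ≃ₗ[ℝ] (W × (Fin n → ℝ)))
    (hΦ : ∀ a b : U × (Fin n → ℝ),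
      Φ ((0 : U), br a.1 b.1) = ((0 : W), br' (Φ a).1 (Φ b).1)) :
    (r' = r ∧ s' = s) ∨ (r' = s ∧ s' = r) := by
  classical
  -- Step 1: the span of brackets is everything
  set S : Submodule ℝ (Fin n → ℝ) :=
    Submodule.span ℝ (Set.range fun p : U × U => br p.1 p.2) with hS
  have hStop : S = ⊤ := by
    by_contra h
    obtain ⟨f, hf0, hfS⟩ := S.exists_dual_map_eq_bot_of_lt_top (lt_top_iff_ne_top.mpr h)
      inferInstance
    set z := ((stdForm n r).toDual (stdForm_nondeg n r)).symm f with hz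
    have hzf : ∀ v, stdForm n r z v = f v := by
      intro v
      have : (stdForm n r).toDual (stdForm_nondeg n r) z = f :=
        LinearEquiv.apply_symm_apply _ f
      exact congrArg (fun g => g v) this
    have hJz : J z = 0 := by
      ext x
      apply hBUnd.1
      intro y
      rw [hbr, hzf]
      have hmem : br x y ∈ S := Submodule.subset_span ⟨(x, y), rfl⟩
      have : f (br x y) ∈ S.map f := Submodule.mem_map_of_mem hmem
      rw [hfS] at this
      simpa using this
    have hz0 : z = 0 := z_eq_zero_of_J_eq_zero n r J hJ z hJz
    apply hf0
    have : (stdForm n r).toDual (stdForm_nondeg n r) z = f :=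
      LinearEquiv.apply_symm_apply _ f
    rw [hz0] at this
    rw [← this, map_zero]
  -- Step 2: Φ preserves the center
  set T : (Fin n → ℝ) →ₗ[ℝ] W :=
    (LinearMap.fst ℝ W (Fin n → ℝ)).comp (Φ.toLinearMap.comp (LinearMap.inr ℝ U (Fin n → ℝ)))
    with hT
  have hT0 : T = 0 := by
    have hTS : S ≤ LinearMap.ker T := by
      rw [Submodule.span_le]
      rintro v ⟨⟨x, y⟩, rfl⟩
      have := hΦ (x, 0) (y, 0)
      simp only [LinearMap.mem_ker]
      show (Φ (0, br x y)).1 = 0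
      rw [this]
    rw [hStop, top_le_iff] at hTS
    exact LinearMap.ker_eq_top.mp hTS
  set φ : (Fin n → ℝ) →ₗ[ℝ] (Fin n → ℝ) :=
    (LinearMap.snd ℝ W (Fin n → ℝ)).comp (Φ.toLinearMap.comp (LinearMap.inr ℝ U (Fin n → ℝ)))
    with hφ
  have hΦ0 : ∀ v, Φ (0, v) = ((0 : W), φ v) := by
    intro v
    have h1 : (Φ (0, v)).1 = 0 := by
      have := LinearMap.congr_fun hT0 v
      simpa [hT] using this
    exact Prod.ext h1 rfl
  have hφinj : Function.Injective φ := by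
    intro v w hvw
    have h1 : Φ (0, v) = Φ (0, w) := by rw [hΦ0, hΦ0, hvw]
    have := Φ.injective h1
    exact congrArg Prod.snd this
  have hφsurj : Function.Surjective φ := LinearMap.injective_iff_surjective.mp hφinj
  have hfirst : ∀ a : U × (Fin n → ℝ), (Φ a).1 = 0 → a.1 = 0 := by
    intro a ha
    obtain ⟨v, hv⟩ := hφsurj (Φ a).2
    have h1 : Φ (0, v) = Φ a := by
      rw [hΦ0, hv]
      exact (Prod.ext ha.symm rfl)
    have := Φ.injective h1
    rw [← this]
  have hΦbr : ∀ a b : U × (Fin n → ℝ), φ (br a.1 b.1) = br' (Φ a).1 (Φ b).1 := by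
    intro a b
    have := hΦ a b
    rw [hΦ0] at this
    exact congrArg Prod.snd this
  -- Step 3: the adjoint map ψ
  set d : Fin n → ℝ := fun i => if (i:ℕ) < r then 1 else -1 with hd
  set ψ : (Fin n → ℝ) →ₗ[ℝ] (Fin n → ℝ) :=
    LinearMap.pi (fun i => d i • ((stdForm n r').flip (φ (Pi.single i 1)))) with hψdef
  have hdd : ∀ i, d i * d i = 1 := by
    intro i; rw [hd]; dsimp only; split <;> norm_num
  have hψ : ∀ w v, stdForm n r (ψ w) v = stdForm n r' w (φ v) := by
    intro w v
    have hv : v = ∑ i, v i • (Pi.single i (1:ℝ) : Fin n → ℝ) := by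
      funext j
      rw [Finset.sum_apply]
      simp [Pi.single_apply, Finset.sum_ite_eq]
    conv_rhs => rw [hv]
    rw [map_sum, map_sum]
    simp only [map_smul, LinearMap.map_smul, smul_eq_mul]
    rw [stdForm_apply]
    apply Finset.sum_congr rfl
    intro i _
    have hψwi : ψ w i = d i * stdForm n r' w (φ (Pi.single i 1)) := by
      rw [hψdef]
      simp only [LinearMap.pi_apply, LinearMap.smul_apply, smul_eq_mul]
      rfl
    rw [hψwi]
    have heq : (if (i:ℕ) < r then (1:ℝ) else -1) = d i := rfl
    rw [heq]
    linear_combination (((stdForm n r') w) (φ (Pi.single i 1)) * v i) * hdd i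
  have hψinj : Function.Injective ψ := by
    intro w1 w2 h12
    have hzero : ∀ u, stdForm n r' (w1 - w2) u = 0 := by
      intro u
      obtain ⟨v, rfl⟩ := hφsurj u
      have e1 := hψ w1 v
      have e2 := hψ w2 v
      rw [h12] at e1
      rw [map_sub, LinearMap.sub_apply, ← e1, ← e2, sub_self]
    have := (stdForm_nondeg n r').1 (w1 - w2) hzero
    exact sub_eq_zero.mp this
  have hψsurj : Function.Surjective ψ := LinearMap.injective_iff_surjective.mp hψinj
  -- Step 4: the null-cone correspondence
  have hcone : ∀ w, stdForm n r' w w = 0 ↔ stdForm n r (ψ w) (ψ w) = 0 := by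
    intro w
    constructor
    · intro h
      obtain ⟨x', hx', hJ'x'⟩ := (null_iff_ker n r' J' hJ' w).mp h
      set a := Φ.symm (x', 0) with ha
      have hΦa : Φ a = (x', 0) := Φ.apply_symm_apply _
      have hx0 : a.1 ≠ 0 := by
        intro h0
        apply hx'
        have haeq : a = ((0 : U), a.2) := Prod.ext h0 rfl
        have : Φ a = ((0:W), φ a.2) := by rw [haeq]; exact hΦ0 a.2
        rw [hΦa] at this
        exact congrArg Prod.fst this
      apply (null_iff_ker n r J hJ (ψ w)).mpr
      refine ⟨a.1, hx0, ?_⟩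
      apply hBUnd.1
      intro y
      rw [hbr, hψ]
      have := hΦbr a (y, 0)
      rw [this, hΦa]
      rw [← hbr']
      have : J' w x' = 0 := hJ'x'
      rw [this]
      simp
    · intro h
      obtain ⟨x, hx, hJx⟩ := (null_iff_ker n r J hJ (ψ w)).mp h
      apply (null_iff_ker n r' J' hJ' w).mpr
      refine ⟨(Φ (x, 0)).1, ?_, ?_⟩
      · intro h0
        exact hx (hfirst (x, 0) h0)
      · apply hBWnd.1
        intro y'
        rw [hbr']
        set b := Φ.symm (y', 0) with hb
        have hΦb : Φ b = (y', 0) := Φ.apply_symm_apply _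
        have e1 : br' (Φ (x, 0)).1 (Φ b).1 = φ (br x b.1) := (hΦbr (x, 0) b).symm
        rw [hΦb] at e1
        have e2 : stdForm n r' w (φ (br x b.1)) = stdForm n r (ψ w) (br x b.1) := (hψ w _).symm
        calc stdForm n r' w (br' (Φ (x,0)).1 y') = stdForm n r' w (φ (br x b.1)) := by
              rw [← e1]
          _ = stdForm n r (ψ w) (br x b.1) := e2
          _ = BU (J (ψ w) x) b.1 := (hbr _ _ _).symm
          _ = 0 := by rw [hJx]; simp
  -- Step 5: compare Witt indices
  set ψe : (Fin n → ℝ) ≃ₗ[ℝ] (Fin n → ℝ) :=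
    LinearEquiv.ofBijective ψ ⟨hψinj, hψsurj⟩ with hψe
  have hmin1 : min r' s' ≤ min r s := by
    obtain ⟨V', hV'null, hV'rank⟩ := exists_null_subspace n r' s' hr's'
    have hnull : ∀ v ∈ Submodule.map (ψe : (Fin n → ℝ) →ₗ[ℝ] (Fin n → ℝ)) V',
        stdForm n r v v = 0 := by
      rintro v ⟨w, hw, rfl⟩
      exact (hcone w).mp (hV'null w hw)
    have := null_finrank_le n r s hrs _ hnull
    rwa [LinearEquiv.finrank_map_eq ψe V', hV'rank] at this
  have hmin2 : min r s ≤ min r' s' := by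
    obtain ⟨V, hVnull, hVrank⟩ := exists_null_subspace n r s hrs
    have hnull : ∀ v ∈ Submodule.map (ψe.symm : (Fin n → ℝ) →ₗ[ℝ] (Fin n → ℝ)) V,
        stdForm n r' v v = 0 := by
      rintro v ⟨u, hu, rfl⟩
      apply (hcone _).mpr
      have h1 : ψ ((ψe.symm : (Fin n → ℝ) →ₗ[ℝ] (Fin n → ℝ)) u) = u := ψe.apply_symm_apply u
      rw [h1]
      exact hVnull u hu
    have := null_finrank_le n r' s' hr's' _ hnull
    rwa [LinearEquiv.finrank_map_eq ψe.symm V, hVrank] at this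
  have hmineq : min r s = min r' s' := le_antisymm hmin2 hmin1
  rcases le_total r s with h | h <;> rcases le_total r' s' with h' | h'
  · rw [min_eq_left h, min_eq_left h'] at hmineq; omega
  · rw [min_eq_left h, min_eq_right h'] at hmineq; omega
  · rw [min_eq_right h, min_eq_left h'] at hmineq; omega
  · rw [min_eq_right h, min_eq_right h'] at hmineq; omega
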